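/- Let C₁ > 0 and C₂ > 0, and define ξ_p, ψ, r as in the JKD setting. Then the measure dG(u) := (ψ(u)/u) du on (0,C₁) plus the atom of mass r/ξ_p at ξ_p is a probability measure; that is, ∫₀^{C₁} ψ(u)/u du + r/ξ_p = 1. -/

import Mathlib

/-- The pole location ξ_p of the JKD function R^D. -/
noncomputable def xip (C₁ C₂ : ℝ) : ℝ := (C₁ + Real.sqrt (C₁ ^ 2 + 4 * C₂ ^ 2)) / 2

/-- The density ψ of the absolutely continuous part of the JKD representing measure. -/
noncomputable def psi (C₁ C₂ u : ℝ) : ℝ :=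
  C₂ * Real.sqrt (u * (C₁ - u)) / (Real.pi * (C₂ ^ 2 + u * (C₁ - u)))

/-- The strength r of the Dirac mass at ξ_p. -/
noncomputable def rres (C₁ C₂ : ℝ) : ℝ :=
  2 * C₂ * Real.sqrt (xip C₁ C₂ * (xip C₁ C₂ - C₁)) / (2 * xip C₁ C₂ - C₁)

section JKDaux

open intervalIntegral MeasureTheory Set

lemma arctanSqrtDeriv (c : ℝ) {x : ℝ} (hx : 0 < x) :
    HasDerivAt (fun y : ℝ => Real.arctan (c * Real.sqrt y))
      (c / (2 * Real.sqrt x * (1 + c ^ 2 * x))) x := by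
  have h1 : HasDerivAt (fun y : ℝ => c * Real.sqrt y) (c * (1 / (2 * Real.sqrt x))) x :=
    (Real.hasDerivAt_sqrt hx.ne').const_mul c
  have h2 : HasDerivAt (fun y : ℝ => Real.arctan (c * Real.sqrt y))
      ((1 / (1 + (c * Real.sqrt x) ^ 2)) * (c * (1 / (2 * Real.sqrt x)))) x :=
    (Real.hasDerivAt_arctan (c * Real.sqrt x)).comp (h := fun y => c * Real.sqrt y) x h1
  convert h2 using 1
  have hs : Real.sqrt x ^ 2 = x := Real.sq_sqrt hx.le
  have hs0 : (0:ℝ) < Real.sqrt x := Real.sqrt_pos.mpr hx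
  rw [mul_pow, hs]
  have h3 : (0:ℝ) < 1 + c ^ 2 * x := by nlinarith [sq_nonneg c]
  rw [mul_one_div, div_mul_div_comm, one_mul, mul_comm (1 + c ^ 2 * x)]

lemma innerDeriv1 (C₁ u : ℝ) (h : C₁ - u ≠ 0) :
    HasDerivAt (fun y : ℝ => y / (C₁ - y)) (C₁ / (C₁ - u) ^ 2) u := by
  have h1 : HasDerivAt (fun y : ℝ => C₁ - y) (-1) u := by
    simpa using (hasDerivAt_id u).const_sub C₁
  have h2 := (hasDerivAt_id u).div h1 h
  simp only [id] at h2
  refine h2.congr_deriv ?_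
  rw [div_eq_div_iff (by positivity) (by positivity)]
  ring

lemma innerDeriv2 (C₁ u : ℝ) (h : u ≠ 0) :
    HasDerivAt (fun y : ℝ => (C₁ - y) / y) (-(C₁ / u ^ 2)) u := by
  have h1 : HasDerivAt (fun y : ℝ => C₁ - y) (-1) u := by
    simpa using (hasDerivAt_id u).const_sub C₁
  have h2 := h1.div (hasDerivAt_id u) h
  simp only [id] at h2
  have h3 : (-1 * u - (C₁ - u) * 1) = -C₁ := by ring
  rw [h3, neg_div] at h2
  exact h2

lemma PhiDeriv (C₁ C₂ p q u : ℝ) (hC₂ : 0 < C₂) (hp : 0 < p) (hq : 0 < q)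
    (hpq : p * q = 1) (hd : C₂ * (p - q) = C₁) (hu : 0 < u) (huC : u < C₁) :
    HasDerivAt (fun y : ℝ => 2 * C₂ / (Real.pi * (C₂ * (p + q))) *
      (p * Real.arctan (p * Real.sqrt (y / (C₁ - y))) -
       q * Real.arctan (q * Real.sqrt (y / (C₁ - y)))))
      (psi C₁ C₂ u / u) u := by
  have hcu : 0 < C₁ - u := by linarith
  have hx : 0 < u / (C₁ - u) := div_pos hu hcu
  have hi := innerDeriv1 C₁ u hcu.ne'
  have h1 : HasDerivAt (fun y : ℝ => p * Real.arctan (p * Real.sqrt (y / (C₁ - y))))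
      (p * (p / (2 * Real.sqrt (u / (C₁ - u)) * (1 + p ^ 2 * (u / (C₁ - u)))) *
        (C₁ / (C₁ - u) ^ 2))) u :=
    (((arctanSqrtDeriv p hx).comp (h := fun y => y / (C₁ - y)) u hi)).const_mul p
  have h2 : HasDerivAt (fun y : ℝ => q * Real.arctan (q * Real.sqrt (y / (C₁ - y))))
      (q * (q / (2 * Real.sqrt (u / (C₁ - u)) * (1 + q ^ 2 * (u / (C₁ - u)))) *
        (C₁ / (C₁ - u) ^ 2))) u :=
    (((arctanSqrtDeriv q hx).comp (h := fun y => y / (C₁ - y)) u hi)).const_mul q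
  have h3 := (h1.sub h2).const_mul (2 * C₂ / (Real.pi * (C₂ * (p + q))))
  refine HasDerivAt.congr_deriv h3 (Eq.symm ?_)
  have ha2 : Real.sqrt u ^ 2 = u := Real.sq_sqrt hu.le
  have hb2 : Real.sqrt (C₁ - u) ^ 2 = C₁ - u := Real.sq_sqrt hcu.le
  have ha0 : 0 < Real.sqrt u := Real.sqrt_pos.mpr hu
  have hb0 : 0 < Real.sqrt (C₁ - u) := Real.sqrt_pos.mpr hcu
  set a := Real.sqrt u with had
  set b := Real.sqrt (C₁ - u) with hbd
  have hsab : Real.sqrt (u * (C₁ - u)) = a * b := Real.sqrt_mul hu.le _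
  have hsd : Real.sqrt (u / (C₁ - u)) = a / b := by
    rw [Real.sqrt_div hu.le, ← had, ← hbd]
  have hxab : u / (C₁ - u) = a ^ 2 / b ^ 2 := by rw [ha2, hb2]
  rw [psi, hsab, hsd, hxab, show C₁ - u = b ^ 2 from hb2.symm,
    show u = a ^ 2 from ha2.symm, show C₁ = a ^ 2 + b ^ 2 from by rw [ha2, hb2]; ring]
  have hd' : C₂ * (p - q) = a ^ 2 + b ^ 2 := by rw [hd, ha2, hb2]; ring
  have key : (b ^ 2 + p ^ 2 * a ^ 2) * (b ^ 2 + q ^ 2 * a ^ 2) * C₂ ^ 2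
      = (a ^ 2 + b ^ 2) ^ 2 * (C₂ ^ 2 + a ^ 2 * b ^ 2) := by
    have k1 : p ^ 2 * q ^ 2 = 1 := by rw [← mul_pow, hpq]; norm_num
    have k2 : C₂ ^ 2 * (p ^ 2 + q ^ 2) = (a ^ 2 + b ^ 2) ^ 2 + 2 * C₂ ^ 2 := by
      have e : C₂ ^ 2 * (p ^ 2 + q ^ 2) = (C₂ * (p - q)) ^ 2 + 2 * C₂ ^ 2 * (p * q) := by ring
      rw [hpq, hd'] at e
      linarith [e]
    linear_combination a ^ 2 * b ^ 2 * k2 + C₂ ^ 2 * a ^ 4 * k1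
  field_simp
  linear_combination (b ^ 2 * (p + q) * (a ^ 2 * b ^ 2 * (p - q) - C₂ * (a ^ 2 + b ^ 2))) * hd' +
    (b ^ 2 * (p + q) * (2 * C₂ * a ^ 2 * b ^ 2 + C₂ * a ^ 4 * (p * q + 1))) * hpq

lemma PsiDeriv (C₁ C₂ p q u : ℝ) (hC₂ : 0 < C₂) (hp : 0 < p) (hq : 0 < q)
    (hpq : p * q = 1) (hd : C₂ * (p - q) = C₁) (hu : 0 < u) (huC : u < C₁) :
    HasDerivAt (fun y : ℝ => 2 * C₂ / (Real.pi * (C₂ * (p + q))) *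
      (q * Real.arctan (p * Real.sqrt ((C₁ - y) / y)) -
       p * Real.arctan (q * Real.sqrt ((C₁ - y) / y))))
      (psi C₁ C₂ u / u) u := by
  have hcu : 0 < C₁ - u := by linarith
  have hx : 0 < (C₁ - u) / u := div_pos hcu hu
  have hi := innerDeriv2 C₁ u hu.ne'
  have h1 : HasDerivAt (fun y : ℝ => q * Real.arctan (p * Real.sqrt ((C₁ - y) / y)))
      (q * (p / (2 * Real.sqrt ((C₁ - u) / u) * (1 + p ^ 2 * ((C₁ - u) / u))) *
        (-(C₁ / u ^ 2)))) u :=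
    (((arctanSqrtDeriv p hx).comp (h := fun y => (C₁ - y) / y) u hi)).const_mul q
  have h2 : HasDerivAt (fun y : ℝ => p * Real.arctan (q * Real.sqrt ((C₁ - y) / y)))
      (p * (q / (2 * Real.sqrt ((C₁ - u) / u) * (1 + q ^ 2 * ((C₁ - u) / u))) *
        (-(C₁ / u ^ 2)))) u :=
    (((arctanSqrtDeriv q hx).comp (h := fun y => (C₁ - y) / y) u hi)).const_mul p
  have h3 := (h1.sub h2).const_mul (2 * C₂ / (Real.pi * (C₂ * (p + q))))
  refine HasDerivAt.congr_deriv h3 (Eq.symm ?_)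
  have ha2 : Real.sqrt u ^ 2 = u := Real.sq_sqrt hu.le
  have hb2 : Real.sqrt (C₁ - u) ^ 2 = C₁ - u := Real.sq_sqrt hcu.le
  have ha0 : 0 < Real.sqrt u := Real.sqrt_pos.mpr hu
  have hb0 : 0 < Real.sqrt (C₁ - u) := Real.sqrt_pos.mpr hcu
  set a := Real.sqrt u with had
  set b := Real.sqrt (C₁ - u) with hbd
  have hsab : Real.sqrt (u * (C₁ - u)) = a * b := Real.sqrt_mul hu.le _
  have hsd : Real.sqrt ((C₁ - u) / u) = b / a := by
    rw [Real.sqrt_div hcu.le, ← had, ← hbd]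
  have hxab : (C₁ - u) / u = b ^ 2 / a ^ 2 := by rw [ha2, hb2]
  rw [psi, hsab, hsd, hxab, show C₁ - u = b ^ 2 from hb2.symm,
    show u = a ^ 2 from ha2.symm, show C₁ = a ^ 2 + b ^ 2 from by rw [ha2, hb2]; ring]
  have hd' : C₂ * (p - q) = a ^ 2 + b ^ 2 := by rw [hd, ha2, hb2]; ring
  field_simp
  linear_combination (b ^ 2 * (p + q) * (a ^ 2 * b ^ 2 * (p - q) - C₂ * (a ^ 2 + b ^ 2))) * hd' +
    (b ^ 2 * (p + q) * (2 * C₂ * a ^ 2 * b ^ 2 + C₂ * b ^ 4 * (p * q + 1) -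
      (C₂ ^ 2 + a ^ 2 * b ^ 2) * (a ^ 2 + b ^ 2) * (p - q))) * hpq

lemma integral_eval (C₁ C₂ p q : ℝ) (hC₁ : 0 < C₁) (hC₂ : 0 < C₂) (hp : 0 < p) (hq : 0 < q)
    (hpq : p * q = 1) (hd : C₂ * (p - q) = C₁) :
    ∫ u in (0:ℝ)..C₁, psi C₁ C₂ u / u = (p - q) / (p + q) := by
  have hπ : (0:ℝ) < Real.pi := Real.pi_pos
  have hhalf : (0:ℝ) ≤ C₁ / 2 := by linarith
  -- integrability on [0, C₁/2]
  have hInt1 : IntervalIntegrable (fun u => psi C₁ C₂ u / u) MeasureTheory.volume 0 (C₁/2) := by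
    have hg : IntervalIntegrable
        (fun u : ℝ => (Real.sqrt C₁ / (Real.pi * C₂)) * u ^ (-(1/2) : ℝ))
        MeasureTheory.volume 0 (C₁/2) :=
      (intervalIntegral.intervalIntegrable_rpow' (by norm_num)).const_mul _
    apply hg.mono_fun'
    · rw [Set.uIoc_of_le hhalf]
      apply ContinuousOn.aestronglyMeasurable _ measurableSet_Ioc
      apply ContinuousOn.div
      · apply ContinuousOn.div
        · exact continuousOn_const.mul
            (Real.continuous_sqrt.comp_continuousOn
              (continuousOn_id.mul (continuousOn_const.sub continuousOn_id)))
        · exact continuousOn_const.mul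
            (continuousOn_const.add (continuousOn_id.mul (continuousOn_const.sub continuousOn_id)))
        · intro x hx
          have hx1 : 0 < x := hx.1
          have hx2 : x ≤ C₁/2 := hx.2
          have h9 : 0 < x * (C₁ - x) := mul_pos hx1 (by linarith)
          show Real.pi * (C₂ ^ 2 + x * (C₁ - x)) ≠ 0
          positivity
      · exact continuousOn_id
      · intro x hx
        show x ≠ 0
        exact ne_of_gt hx.1
    · rw [Set.uIoc_of_le hhalf]
      refine (MeasureTheory.ae_restrict_iff' measurableSet_Ioc).mpr
        (Filter.Eventually.of_forall fun x hx => ?_)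
      have hx1 : 0 < x := hx.1
      have hx2 : x ≤ C₁/2 := hx.2
      have hcx : 0 < C₁ - x := by linarith
      have hm : 0 < x * (C₁ - x) := mul_pos hx1 hcx
      have hfnn : 0 ≤ psi C₁ C₂ x / x := by
        rw [psi]
        positivity
      show ‖psi C₁ C₂ x / x‖ ≤ Real.sqrt C₁ / (Real.pi * C₂) * x ^ (-(1/2) : ℝ)
      rw [Real.norm_eq_abs, abs_of_nonneg hfnn, psi]
      have e1 : Real.sqrt (x * (C₁ - x)) ≤ Real.sqrt (x * C₁) :=
        Real.sqrt_le_sqrt (by nlinarith)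
      have step : C₂ * Real.sqrt (x * (C₁ - x)) / (Real.pi * (C₂ ^ 2 + x * (C₁ - x))) / x
          ≤ C₂ * Real.sqrt (x * C₁) / (Real.pi * C₂ ^ 2) / x := by
        gcongr
        all_goals first
          | positivity
          | exact e1
          | nlinarith
      refine le_trans step (le_of_eq ?_)
      have ht2 : Real.sqrt x ^ 2 = x := Real.sq_sqrt hx1.le
      have ht0 : 0 < Real.sqrt x := Real.sqrt_pos.mpr hx1
      rw [Real.sqrt_mul hx1.le, show x ^ (-(1/2) : ℝ) = (Real.sqrt x)⁻¹ by
        rw [Real.rpow_neg hx1.le, Real.sqrt_eq_rpow]]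
      field_simp
      linear_combination ht2
  -- integrability on [C₁/2, C₁]
  have hInt2 : IntervalIntegrable (fun u => psi C₁ C₂ u / u) MeasureTheory.volume (C₁/2) C₁ := by
    apply ContinuousOn.intervalIntegrable
    rw [Set.uIcc_of_le (by linarith)]
    apply ContinuousOn.div
    · apply ContinuousOn.div
      · exact continuousOn_const.mul
          (Real.continuous_sqrt.comp_continuousOn
            (continuousOn_id.mul (continuousOn_const.sub continuousOn_id)))
      · exact continuousOn_const.mul
          (continuousOn_const.add (continuousOn_id.mul (continuousOn_const.sub continuousOn_id)))
      · intro x hx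
        have hx1 : C₁/2 ≤ x := hx.1
        have hx2 : x ≤ C₁ := hx.2
        have h9 : 0 ≤ x * (C₁ - x) := mul_nonneg (by linarith) (by linarith)
        show Real.pi * (C₂ ^ 2 + x * (C₁ - x)) ≠ 0
        positivity
    · exact continuousOn_id
    · intro x hx
      have h8 : C₁/2 ≤ x := hx.1
      show x ≠ 0
      intro h0
      rw [h0] at h8
      linarith
  -- continuity of the two antiderivatives
  have hb1 : ContinuousOn (fun y : ℝ => y / (C₁ - y)) (Icc 0 (C₁/2)) := by
    apply ContinuousOn.div continuousOn_id (continuousOn_const.sub continuousOn_id)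
    intro y hy
    show C₁ - y ≠ 0
    intro h
    have := hy.2
    linarith
  have hb2 : ContinuousOn (fun y : ℝ => (C₁ - y) / y) (Icc (C₁/2) C₁) := by
    apply ContinuousOn.div (continuousOn_const.sub continuousOn_id) continuousOn_id
    intro y hy
    show y ≠ 0
    intro h
    have := hy.1
    linarith
  have hcont1 : ContinuousOn (fun y : ℝ => 2 * C₂ / (Real.pi * (C₂ * (p + q))) *
      (p * Real.arctan (p * Real.sqrt (y / (C₁ - y))) -
       q * Real.arctan (q * Real.sqrt (y / (C₁ - y))))) (Icc 0 (C₁/2)) := by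
    have harc : ∀ c : ℝ, ContinuousOn
        (fun y : ℝ => Real.arctan (c * Real.sqrt (y / (C₁ - y)))) (Icc 0 (C₁/2)) := fun c =>
      Real.continuous_arctan.comp_continuousOn
        (continuousOn_const.mul (Real.continuous_sqrt.comp_continuousOn hb1))
    exact continuousOn_const.mul
      ((continuousOn_const.mul (harc p)).sub (continuousOn_const.mul (harc q)))
  have hcont2 : ContinuousOn (fun y : ℝ => 2 * C₂ / (Real.pi * (C₂ * (p + q))) *
      (q * Real.arctan (p * Real.sqrt ((C₁ - y) / y)) -
       p * Real.arctan (q * Real.sqrt ((C₁ - y) / y)))) (Icc (C₁/2) C₁) := by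
    have harc : ∀ c : ℝ, ContinuousOn
        (fun y : ℝ => Real.arctan (c * Real.sqrt ((C₁ - y) / y))) (Icc (C₁/2) C₁) := fun c =>
      Real.continuous_arctan.comp_continuousOn
        (continuousOn_const.mul (Real.continuous_sqrt.comp_continuousOn hb2))
    exact continuousOn_const.mul
      ((continuousOn_const.mul (harc p)).sub (continuousOn_const.mul (harc q)))
  have hFTC1 := intervalIntegral.integral_eq_sub_of_hasDeriv_right_of_le
    (show (0:ℝ) ≤ C₁/2 by linarith) hcont1
    (fun x hx => (PhiDeriv C₁ C₂ p q x hC₂ hp hq hpq hd hx.1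
      (by linarith [hx.2])).hasDerivWithinAt) hInt1
  have hFTC2 := intervalIntegral.integral_eq_sub_of_hasDeriv_right_of_le
    (show C₁/2 ≤ C₁ by linarith) hcont2
    (fun x hx => (PsiDeriv C₁ C₂ p q x hC₂ hp hq hpq hd
      (by linarith [hx.1]) hx.2).hasDerivWithinAt) hInt2
  have hsplit := intervalIntegral.integral_add_adjacent_intervals hInt1 hInt2
  rw [← hsplit, hFTC1, hFTC2]
  have Em : (C₁/2) / (C₁ - C₁/2) = 1 := by
    rw [show C₁ - C₁/2 = C₁/2 by ring]
    exact div_self (by linarith)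
  have Em' : (C₁ - C₁/2) / (C₁/2) = 1 := by
    rw [show C₁ - C₁/2 = C₁/2 by ring]
    exact div_self (by linarith)
  rw [Em, Em']
  simp only [zero_div, sub_self, Real.sqrt_zero, mul_zero, Real.arctan_zero, sub_zero,
    Real.sqrt_one, mul_one]
  have hq' : q = p⁻¹ := by
    field_simp
    linarith [hpq]
  have harct : Real.arctan q = Real.pi/2 - Real.arctan p := by
    rw [hq']
    exact Real.arctan_inv_of_pos hp
  rw [harct]
  have hpq0 : 0 < p + q := by linarith
  field_simp
  ring

end JKDaux

/-- The measure dG(u) = (ψ(u)/u) du + (r/ξ_p) δ_{ξ_p} is a probability measure. -/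
theorem stmt1 (C₁ C₂ : ℝ) (hC₁ : 0 < C₁) (hC₂ : 0 < C₂) :
    (∫ u in (0:ℝ)..C₁, psi C₁ C₂ u / u) + rres C₁ C₂ / xip C₁ C₂ = 1 := by
  have hS2 : Real.sqrt (C₁ ^ 2 + 4 * C₂ ^ 2) ^ 2 = C₁ ^ 2 + 4 * C₂ ^ 2 :=
    Real.sq_sqrt (by positivity)
  have hS0 : 0 ≤ Real.sqrt (C₁ ^ 2 + 4 * C₂ ^ 2) := Real.sqrt_nonneg _
  set S := Real.sqrt (C₁ ^ 2 + 4 * C₂ ^ 2) with hSdef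
  have hSC : C₁ < S := by nlinarith
  have hxv : xip C₁ C₂ = (C₁ + S) / 2 := rfl
  have hx0 : 0 < xip C₁ C₂ := by rw [hxv]; linarith
  set x := xip C₁ C₂ with hxdef
  have hquad : x ^ 2 = C₁ * x + C₂ ^ 2 := by
    rw [hxv]
    linear_combination hS2 / 4
  have hp : 0 < x / C₂ := by positivity
  have hq : 0 < C₂ / x := by positivity
  have hpq : (x / C₂) * (C₂ / x) = 1 := by field_simp
  have hd : C₂ * (x / C₂ - C₂ / x) = C₁ := by
    field_simp
    linear_combination hquad
  have hI := integral_eval C₁ C₂ (x / C₂) (C₂ / x) hC₁ hC₂ hp hq hpq hd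
  rw [hI]
  have hprod : x * (x - C₁) = C₂ ^ 2 := by linear_combination hquad
  have hrr : rres C₁ C₂ = 2 * C₂ ^ 2 / (2 * x - C₁) := by
    rw [rres, ← hxdef, hprod, Real.sqrt_sq hC₂.le]
    ring
  rw [hrr]
  have h2x : 2 * x - C₁ = S := by rw [hxv]; ring
  have h2x0 : 0 < 2 * x - C₁ := by rw [h2x]; linarith
  have hsum : 0 < x / C₂ + C₂ / x := by positivity
  have hne : x / C₂ + C₂ / x ≠ 0 := hsum.ne'
  have h2x' : x * 2 - C₁ ≠ 0 := by linarith
  field_simp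
  linear_combination (-2 * C₂ ^ 2) * hquad
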